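/- For the clutter C_k(P_n) of the path on n vertices (edges are sets of k consecutive vertices, 2 ≤ k ≤ n), the edgewise domination number equals ⌈n/(3k−2)⌉. -/
import Mathlib


/-- A vertex is isolated in a clutter if it lies in no edge. -/
def IsIsolated {V : Type} (Ed : Finset V → Prop) (v : V) : Prop := ∀ e, Ed e → v ∉ e

/-- A set `F` of edges of the clutter with edge predicate `Ed` is edgewise dominant if every
non-isolated vertex that lies in no edge of `F` and in no trivial edge has a neighbor
contained in some edge of `F`. -/
def EdgewiseDominant {V : Type} (Ed : Finset V → Prop) (F : Finset (Finset V)) : Prop :=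
  (∀ f ∈ F, Ed f) ∧
    ∀ v : V, ¬ IsIsolated Ed v → (∀ f ∈ F, v ∉ f) → (∀ e, Ed e → v ∈ e → e.card ≠ 1) →
      ∃ w : V, (∃ e, Ed e ∧ v ∈ e ∧ w ∈ e) ∧ ∃ f ∈ F, w ∈ f

/-- `ε(C)`: the minimum cardinality of an edgewise dominant set of edges. -/
noncomputable def epsilonDom {V : Type} (Ed : Finset V → Prop) : ℕ :=
  sInf {m : ℕ | ∃ F : Finset (Finset V), EdgewiseDominant Ed F ∧ F.card = m}

/-- The edges of the clutter `C_k(P_n)` of the path on vertices `0, …, n-1`: sets of `k`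
consecutive vertices. -/
def PathEdge (n k : ℕ) (A : Finset ℕ) : Prop :=
  ∃ a : ℕ, a + k ≤ n ∧ A = (Finset.range k).image (fun j => a + j)

/-- The interval of `k` consecutive integers starting at `a`. -/
def pEdge (a k : ℕ) : Finset ℕ := (Finset.range k).image (fun j => a + j)

lemma mem_pEdge {a k v : ℕ} : v ∈ pEdge a k ↔ a ≤ v ∧ v < a + k := by
  simp only [pEdge, Finset.mem_image, Finset.mem_range]
  constructor
  · rintro ⟨j, hj, rfl⟩; omega
  · rintro ⟨h1, h2⟩; exact ⟨v - a, by omega, by omega⟩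

lemma card_pEdge (a k : ℕ) : (pEdge a k).card = k := by
  rw [pEdge, Finset.card_image_of_injective _ (add_right_injective a), Finset.card_range]

lemma pathEdge_pEdge {n k a : ℕ} (h : a + k ≤ n) : PathEdge n k (pEdge a k) :=
  ⟨a, h, rfl⟩

lemma exists_common_edge {n k v w : ℕ} (hk : 0 < k) (hkn : k ≤ n) (hv : v < n) (hw : w < n)
    (h1 : v ≤ w + (k - 1)) (h2 : w ≤ v + (k - 1)) :
    ∃ e, PathEdge n k e ∧ v ∈ e ∧ w ∈ e := by
  refine ⟨pEdge (min (min v w) (n - k)) k, pathEdge_pEdge (by omega),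
    mem_pEdge.2 ⟨by omega, by omega⟩, mem_pEdge.2 ⟨by omega, by omega⟩⟩

lemma not_isolated_path {n k v : ℕ} (hk : 0 < k) (hkn : k ≤ n) (hv : v < n) :
    ¬ IsIsolated (PathEdge n k) v := by
  intro h
  exact h (pEdge (min v (n - k)) k) (pathEdge_pEdge (by omega))
    (mem_pEdge.2 ⟨by omega, by omega⟩)

lemma lt_of_not_isolated_path {n k v : ℕ} (h : ¬ IsIsolated (PathEdge n k) v) : v < n := by
  by_contra hv
  apply h
  rintro e ⟨a, ha, rfl⟩ hve
  have := mem_pEdge.1 (show v ∈ pEdge a k from hve)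
  omega

/-- For `2 ≤ k ≤ n`, the edgewise domination number of the clutter `C_k(P_n)` of the path on
`n` vertices equals `⌈n/(3k-2)⌉`. -/
theorem epsilonDom_path (n k : ℕ) (hk : 2 ≤ k) (hn : k ≤ n) :
    epsilonDom (PathEdge n k) = (n + (3 * k - 2) - 1) / (3 * k - 2) := by
  have hk0 : 0 < k := by omega
  set s := 3 * k - 2 with hs
  have hsp : 0 < s := by omega
  set q := (n + s - 1) / s with hq
  -- `q ≤ c ↔ n ≤ c * s`
  have hchar : ∀ c : ℕ, q ≤ c ↔ n ≤ s * c := by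
    intro c
    rw [hq, Nat.div_le_iff_le_mul_add_pred hsp]
    omega
  have hq1 : n ≤ s * q := (hchar q).1 le_rfl
  have hq0 : 1 ≤ q := by
    by_contra h0
    have h1 : q ≤ 0 := by omega
    have h2 : n ≤ s * 0 := (hchar 0).1 h1
    simp only [Nat.mul_zero] at h2
    omega
  have hq2 : s * (q - 1) < n := by
    by_contra hcon
    have : q ≤ q - 1 := (hchar (q - 1)).2 (by omega)
    omega
  -- the construction
  set a : ℕ → ℕ := fun i => min (s * i + (k - 1)) (n - k) with ha
  have han : ∀ i, a i + k ≤ n := fun i => by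
    show min (s * i + (k - 1)) (n - k) + k ≤ n
    omega
  set F : Finset (Finset ℕ) := (Finset.range q).image (fun i => pEdge (a i) k) with hF
  have hdom : EdgewiseDominant (PathEdge n k) F := by
    constructor
    · intro f hf
      rw [hF, Finset.mem_image] at hf
      obtain ⟨i, _, rfl⟩ := hf
      exact pathEdge_pEdge (han i)
    · intro v hni _ _
      have hv : v < n := lt_of_not_isolated_path hni
      obtain ⟨i, hiq, ht1, ht2⟩ : ∃ i, i < q ∧ s * i ≤ v ∧ v < s * i + s := by
        refine ⟨v / s, ?_, ?_, ?_⟩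
        · rw [Nat.div_lt_iff_lt_mul hsp]
          calc v < n := hv
            _ ≤ s * q := hq1
            _ = q * s := Nat.mul_comm s q
        · calc s * (v / s) = v / s * s := Nat.mul_comm s (v / s)
            _ ≤ v := Nat.div_mul_le_self v s
        · have h1 := Nat.div_add_mod v s
          have h2 := Nat.mod_lt v hsp
          omega
      have hA : a i = min (s * i + (k - 1)) (n - k) := rfl
      set w := max (a i) (min v (a i + (k - 1))) with hw
      have hwmem : w ∈ pEdge (a i) k := mem_pEdge.2 ⟨by omega, by omega⟩
      have hwn : w < n := by have := han i; omega
      obtain ⟨e, he, hve, hwe⟩ :=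
        exists_common_edge (v := v) (w := w) hk0 hn hv hwn (by omega) (by omega)
      exact ⟨w, ⟨e, he, hve, hwe⟩,
        pEdge (a i) k, Finset.mem_image.2 ⟨i, Finset.mem_range.2 hiq, rfl⟩, hwmem⟩
  have hcard : F.card = q := by
    rw [hF, Finset.card_image_of_injOn, Finset.card_range]
    intro i hi j hj hij
    simp only [Finset.coe_range, Set.mem_Iio] at hi hj
    have key : ∀ x y : ℕ, x < y → y < q → a x < a y := by
      intro x y hxy hyq
      have h1 : s * x + s ≤ s * y := by
        have h := Nat.mul_le_mul_left s (show x + 1 ≤ y by omega)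
        rw [Nat.mul_add, Nat.mul_one] at h
        exact h
      have h2 : s * y < n := by
        have h := Nat.mul_le_mul_left s (show y ≤ q - 1 by omega)
        omega
      show min (s * x + (k - 1)) (n - k) < min (s * y + (k - 1)) (n - k)
      omega
    have hij' : pEdge (a i) k = pEdge (a j) k := hij
    have hmem : a i ∈ pEdge (a j) k := by
      rw [← hij']; exact mem_pEdge.2 ⟨le_rfl, by omega⟩
    have hmem' : a j ∈ pEdge (a i) k := by
      rw [hij']; exact mem_pEdge.2 ⟨le_rfl, by omega⟩
    have e1 := (mem_pEdge.1 hmem).1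
    have e2 := (mem_pEdge.1 hmem').1
    rcases lt_trichotomy i j with h | h | h
    · exact absurd (key i j h hj) (by omega)
    · exact h
    · exact absurd (key j i h hi) (by omega)
  -- lower bound: any dominant set has at least q edges
  have hlow : ∀ c ∈ {m : ℕ | ∃ G : Finset (Finset ℕ),
      EdgewiseDominant (PathEdge n k) G ∧ G.card = m}, q ≤ c := by
    rintro c ⟨G, ⟨hG1, hG2⟩, rfl⟩
    classical
    set Dom : Finset ℕ → Finset ℕ :=
      fun f => f.biUnion (fun x => Finset.Ico (x - (k - 1)) (x + k)) with hDom
    have hsub : Finset.range n ⊆ G.biUnion Dom := by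
      intro v hv
      rw [Finset.mem_range] at hv
      by_cases hin : ∃ f ∈ G, v ∈ f
      · obtain ⟨f, hfG, hvf⟩ := hin
        exact Finset.mem_biUnion.2 ⟨f, hfG,
          Finset.mem_biUnion.2 ⟨v, hvf, Finset.mem_Ico.2 ⟨by omega, by omega⟩⟩⟩
      · push_neg at hin
        obtain ⟨w, ⟨e, he, hve, hwe⟩, f, hfG, hwf⟩ :=
          hG2 v (not_isolated_path hk0 hn hv) hin (by
            rintro e ⟨b, hb, rfl⟩ _
            rw [show (Finset.range k).image (fun j => b + j) = pEdge b k from rfl,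
              card_pEdge]
            omega)
        obtain ⟨b, hb, rfl⟩ := he
        have hvb := mem_pEdge.1 (show v ∈ pEdge b k from hve)
        have hwb := mem_pEdge.1 (show w ∈ pEdge b k from hwe)
        exact Finset.mem_biUnion.2 ⟨f, hfG,
          Finset.mem_biUnion.2 ⟨w, hwf, Finset.mem_Ico.2 ⟨by omega, by omega⟩⟩⟩
    have hcardDom : ∀ f ∈ G, (Dom f).card ≤ s := by
      intro f hf
      obtain ⟨b, hb, rfl⟩ := hG1 f hf
      have hsub2 : Dom ((Finset.range k).image (fun j => b + j)) ⊆
          Finset.Ico (b - (k - 1)) (b + (2 * k - 1)) := by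
        intro x hx
        rw [hDom] at hx
        obtain ⟨y, hy, hxy⟩ := Finset.mem_biUnion.1 hx
        have hyb := mem_pEdge.1 (show y ∈ pEdge b k from hy)
        rw [Finset.mem_Ico] at hxy ⊢
        omega
      calc (Dom _).card ≤ (Finset.Ico (b - (k - 1)) (b + (2 * k - 1))).card :=
            Finset.card_le_card hsub2
        _ ≤ s := by rw [Nat.card_Ico]; omega
    have hn_le : n ≤ s * G.card := by
      calc n = (Finset.range n).card := (Finset.card_range n).symm
        _ ≤ (G.biUnion Dom).card := Finset.card_le_card hsub
        _ ≤ ∑ f ∈ G, (Dom f).card := Finset.card_biUnion_le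
        _ ≤ G.card • s := Finset.sum_le_card_nsmul _ _ _ hcardDom
        _ = s * G.card := by rw [smul_eq_mul, Nat.mul_comm]
    exact (hchar G.card).2 hn_le
  have hmem : q ∈ {m : ℕ | ∃ G : Finset (Finset ℕ),
      EdgewiseDominant (PathEdge n k) G ∧ G.card = m} := ⟨F, hdom, hcard⟩
  exact le_antisymm (Nat.sInf_le hmem) (le_csInf ⟨q, hmem⟩ hlow)
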